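/- In the well-mixed identity-expression game with finite strategy sets, a pure strategy Nash equilibrium exists: there is a profile X* ∈ ({a,…,b}^d)^N such that for every player i and every alternative strategy x'_i ∈ {a,…,b}^d, u_i(X*) ≥ u_i(X' ) where X' is obtained from X* by replacing x*_i with x'_i. In particular, any profile maximizing the potential Φ(X) = −∑_{i=1}^N [ ((N−1)/N)·‖x_i − x̄‖² + (λ/2)·n_i(X) ] over all profiles is such a Nash equilibrium. -/
import Mathlib

open Finset

/-- Squared Euclidean norm of a real vector. -/
noncomputable def sqnorm {d : ℕ} (v : Fin d → ℝ) : ℝ := ∑ k, (v k) ^ 2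

/-- Population mean of the strategy profile `X`, computed coordinatewise in ℝ. -/
noncomputable def mean {N d : ℕ} (X : Fin N → Fin d → ℤ) : Fin d → ℝ :=
  fun k => (∑ j, (X j k : ℝ)) / N

/-- `nSame X i` is the number of players `j ≠ i` with exactly the same strategy as `i`. -/
def nSame {N d : ℕ} (X : Fin N → Fin d → ℤ) (i : Fin N) : ℕ :=
  (univ.filter (fun j => j ≠ i ∧ X j = X i)).card

/-- Well-mixed utility: `u_i(X) = -‖x_i - x̄‖² - λ n_i(X)`. -/
noncomputable def wmUtility {N d : ℕ} (lam : ℝ) (X : Fin N → Fin d → ℤ) (i : Fin N) : ℝ :=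
  - sqnorm (fun k => (X i k : ℝ) - mean X k) - lam * nSame X i

/-- The potential function `Φ(X) = -∑ i ((N-1)/N ‖x_i - x̄‖² + (λ/2) n_i(X))`. -/
noncomputable def Phi {N d : ℕ} (lam : ℝ) (X : Fin N → Fin d → ℤ) : ℝ :=
  - ∑ i, (((N : ℝ) - 1) / N * sqnorm (fun k => (X i k : ℝ) - mean X k)
      + lam / 2 * nSame X i)

/-- A strategy is feasible if each of its `d` coordinates lies in `{a..b}`. -/
def Feasible {d : ℕ} (a b : ℤ) (x : Fin d → ℤ) : Prop := ∀ k, x k ∈ Set.Icc a b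

/-! ### Auxiliary lemmas -/

lemma scalar_id (n : ℝ) (hn : n ≠ 0) (y y' T : ℝ) :
    (n - 1)/n * ((y'^2 - y^2) - ((T - y + y')^2 - T^2)/n)
      = (y' - (T - y + y')/n)^2 - (y - T/n)^2 := by
  field_simp
  ring

lemma sum_sq_sub_mean {n : ℕ} (hn : (n:ℝ) ≠ 0) (y : Fin n → ℝ) :
    ∑ j, (y j - (∑ l, y l) / n) ^ 2 = ∑ j, (y j) ^ 2 - (∑ l, y l) ^ 2 / n := by
  set T := ∑ l, y l with hT
  calc ∑ j, (y j - T/n)^2 = ∑ j, ((y j)^2 - 2*(T/n)*(y j) + (T/n)^2) :=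
        Finset.sum_congr rfl (fun j _ => by ring)
    _ = (∑ j, (y j)^2) - 2*(T/n)*T + n*(T/n)^2 := by
        rw [Finset.sum_add_distrib, Finset.sum_sub_distrib, ← Finset.mul_sum,
          Finset.sum_const, Finset.card_univ, Fintype.card_fin, nsmul_eq_mul, ← hT]
    _ = ∑ j, (y j)^2 - T^2/n := by field_simp; ring

lemma sum_comp_update {N : ℕ} {β : Type*} {M : Type*} [AddCommGroup M]
    (g : β → M) (X : Fin N → β) (i : Fin N) (b : β) :
    ∑ j, g (Function.update X i b j) = ∑ j, g (X j) - g (X i) + g b := by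
  have h : ∀ j, g (Function.update X i b j)
      = Function.update (fun j => g (X j)) i (g b) j := by
    intro j; by_cases hj : j = i
    · subst hj; simp
    · simp [Function.update_of_ne hj]
  rw [Finset.sum_congr rfl (fun j _ => h j), Finset.sum_update_of_mem (Finset.mem_univ i),
    ← Finset.erase_eq, Finset.sum_erase_eq_sub (Finset.mem_univ i)]
  abel

lemma nSame_cast {N d : ℕ} (X : Fin N → Fin d → ℤ) (i : Fin N) :
    (nSame X i : ℝ) = ∑ l, if (l ≠ i ∧ X l = X i) then (1:ℝ) else 0 := by
  rw [nSame, Finset.card_filter]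
  push_cast
  rfl

lemma nSame_erase {N d : ℕ} (X : Fin N → Fin d → ℤ) (i : Fin N) :
    (nSame X i : ℝ) = ∑ l ∈ univ.erase i, if X l = X i then (1:ℝ) else 0 := by
  rw [nSame_cast, ← Finset.add_sum_erase _ _ (Finset.mem_univ i)]
  simp only [ne_eq, not_true_eq_false, false_and, if_false, zero_add]
  exact Finset.sum_congr rfl (fun l hl => by
    simp [Finset.mem_erase.mp hl |>.1])

lemma sum_nSame_eq {N d : ℕ} (X : Fin N → Fin d → ℤ) (i : Fin N) :
    ∑ j, (nSame X j : ℝ) = 2 * (nSame X i : ℝ)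
      + ∑ j ∈ univ.erase i, ∑ l ∈ univ.erase i,
          (if (l ≠ j ∧ X l = X j) then (1:ℝ) else 0) := by
  have hF : ∀ j, (nSame X j : ℝ) = ∑ l, if (l ≠ j ∧ X l = X j) then (1:ℝ) else 0 :=
    nSame_cast X
  rw [Finset.sum_congr rfl (fun j _ => hF j),
    ← Finset.add_sum_erase _ _ (Finset.mem_univ i)]
  have hcol : ∀ j ∈ univ.erase i,
      (∑ l, if (l ≠ j ∧ X l = X j) then (1:ℝ) else 0)
        = (if X i = X j then (1:ℝ) else 0)
          + ∑ l ∈ univ.erase i, (if (l ≠ j ∧ X l = X j) then (1:ℝ) else 0) := by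
    intro j hj
    rw [← Finset.add_sum_erase _ _ (Finset.mem_univ i)]
    have hij : i ≠ j := fun h => (Finset.mem_erase.mp hj).1 h.symm
    simp [hij]
  rw [Finset.sum_congr rfl hcol, Finset.sum_add_distrib]
  have h1 : ∑ j ∈ univ.erase i, (if X i = X j then (1:ℝ) else 0) = (nSame X i : ℝ) := by
    rw [nSame_erase]
    exact Finset.sum_congr rfl (fun l _ => by simp [eq_comm])
  rw [h1, ← hF i]
  ring

/-- The exact-potential property: a unilateral deviation changes `Φ` by exactly the
change in the deviator's utility. -/
lemma phi_diff {N d : ℕ} (hN : (N:ℝ) ≠ 0) (lam : ℝ) (X : Fin N → Fin d → ℤ)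
    (i : Fin N) (x' : Fin d → ℤ) :
    Phi lam (Function.update X i x') - Phi lam X
      = wmUtility lam (Function.update X i x') i - wmUtility lam X i := by
  set X' := Function.update X i x' with hX'
  have hXi : X' i = x' := by rw [hX']; exact Function.update_self i x' X
  have hT : ∀ k, (∑ j, (X' j k : ℝ)) = (∑ j, (X j k : ℝ)) - (X i k : ℝ) + (x' k : ℝ) := by
    intro k
    simpa using sum_comp_update (fun v : Fin d → ℤ => (v k : ℝ)) X i x'
  have hSq : ∀ k, (∑ j, ((X' j k : ℝ))^2)
      = (∑ j, ((X j k:ℝ))^2) - ((X i k:ℝ))^2 + ((x' k:ℝ))^2 := by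
    intro k
    simpa using sum_comp_update (fun v : Fin d → ℤ => ((v k : ℝ))^2) X i x'
  -- quadratic part
  have hvar : ∀ (Y : Fin N → Fin d → ℤ),
      ∑ j, sqnorm (fun k => (Y j k:ℝ) - mean Y k)
        = ∑ k, ((∑ j, ((Y j k:ℝ))^2) - (∑ j, (Y j k:ℝ))^2 / N) := by
    intro Y
    simp only [sqnorm, mean]
    rw [Finset.sum_comm]
    exact Finset.sum_congr rfl (fun k _ => sum_sq_sub_mean hN _)
  have hquad : ((N:ℝ)-1)/N * ((∑ j, sqnorm (fun k => (X' j k:ℝ) - mean X' k))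
        - ∑ j, sqnorm (fun k => (X j k:ℝ) - mean X k))
      = sqnorm (fun k => (X' i k:ℝ) - mean X' k)
        - sqnorm (fun k => (X i k:ℝ) - mean X k) := by
    rw [hvar X', hvar X]
    simp only [sqnorm, mean, hXi]
    rw [← Finset.sum_sub_distrib, Finset.mul_sum, ← Finset.sum_sub_distrib]
    refine Finset.sum_congr rfl (fun k _ => ?_)
    rw [hSq k, hT k]
    linear_combination scalar_id (N:ℝ) hN (X i k : ℝ) (x' k : ℝ) (∑ j, (X j k:ℝ))
  -- counting part
  have hcount : ∑ j, (nSame X' j : ℝ)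
      = ∑ j, (nSame X j : ℝ) + 2*(nSame X' i : ℝ) - 2*(nSame X i : ℝ) := by
    rw [sum_nSame_eq X' i, sum_nSame_eq X i]
    have hD : (∑ j ∈ univ.erase i, ∑ l ∈ univ.erase i,
          (if (l ≠ j ∧ X' l = X' j) then (1:ℝ) else 0))
        = ∑ j ∈ univ.erase i, ∑ l ∈ univ.erase i,
          (if (l ≠ j ∧ X l = X j) then (1:ℝ) else 0) := by
      refine Finset.sum_congr rfl (fun j hj => Finset.sum_congr rfl (fun l hl => ?_))
      rw [hX', Function.update_of_ne (Finset.mem_erase.mp hl).1,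
        Function.update_of_ne (Finset.mem_erase.mp hj).1]
    rw [hD]
    ring
  have hPhi : ∀ (Y : Fin N → Fin d → ℤ), Phi lam Y
      = -(((N:ℝ)-1)/N * (∑ j, sqnorm (fun k => (Y j k:ℝ) - mean Y k))
          + lam/2 * ∑ j, (nSame Y j : ℝ)) := by
    intro Y
    rw [Phi, Finset.sum_add_distrib, ← Finset.mul_sum, ← Finset.mul_sum]
  rw [hPhi X', hPhi X, wmUtility, wmUtility]
  linear_combination (-1 : ℝ) * hquad + (-(lam/2)) * hcount

/-- In the well-mixed game with finite strategy sets `{a..b}^d`, a pure strategy Nash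
equilibrium exists; moreover, any feasible profile maximizing the potential `Φ` over
feasible profiles is such a Nash equilibrium. -/
theorem exists_pure_nash {N d : ℕ} (hN : 2 ≤ N) (a b : ℤ) (hab : a ≤ b)
    (lam : ℝ) (hlam : 0 < lam) :
    (∃ X : Fin N → Fin d → ℤ, (∀ i, Feasible a b (X i)) ∧
      ∀ i (x' : Fin d → ℤ), Feasible a b x' →
        wmUtility lam (Function.update X i x') i ≤ wmUtility lam X i) ∧
    (∀ X : Fin N → Fin d → ℤ, (∀ i, Feasible a b (X i)) →
      (∀ Y : Fin N → Fin d → ℤ, (∀ i, Feasible a b (Y i)) → Phi lam Y ≤ Phi lam X) →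
      ∀ i (x' : Fin d → ℤ), Feasible a b x' →
        wmUtility lam (Function.update X i x') i ≤ wmUtility lam X i) := by
  classical
  have hNne : (N:ℝ) ≠ 0 := Nat.cast_ne_zero.mpr (by omega)
  have key2 : ∀ X : Fin N → Fin d → ℤ, (∀ i, Feasible a b (X i)) →
      (∀ Y : Fin N → Fin d → ℤ, (∀ i, Feasible a b (Y i)) → Phi lam Y ≤ Phi lam X) →
      ∀ i (x' : Fin d → ℤ), Feasible a b x' →
        wmUtility lam (Function.update X i x') i ≤ wmUtility lam X i := by
    intro X hfeas hmax i x' hx'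
    have hfeas' : ∀ j, Feasible a b (Function.update X i x' j) := by
      intro j; by_cases hj : j = i
      · subst hj; simpa using hx'
      · rw [Function.update_of_ne hj]; exact hfeas j
    have h1 := hmax _ hfeas'
    have h2 := phi_diff hNne lam X i x'
    linarith
  refine ⟨?_, key2⟩
  set F : Finset (Fin N → Fin d → ℤ) :=
    Fintype.piFinset (fun _ => Fintype.piFinset (fun _ => Finset.Icc a b)) with hF
  have hmemF : ∀ X : Fin N → Fin d → ℤ, X ∈ F ↔ ∀ i, Feasible a b (X i) := by
    intro X
    simp [hF, Fintype.mem_piFinset, Feasible, Finset.mem_Icc, Set.mem_Icc]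
  have hne : F.Nonempty :=
    ⟨fun _ _ => a, (hmemF _).mpr (fun i k => ⟨le_refl a, hab⟩)⟩
  obtain ⟨X, hXF, hXmax⟩ := F.exists_max_image (Phi lam) hne
  exact ⟨X, (hmemF X).mp hXF,
    key2 X ((hmemF X).mp hXF) (fun Y hY => hXmax Y ((hmemF Y).mpr hY))⟩
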